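/- arXiv:2202.01544 — 3 statements merged into one kernel-verified Lean document; each statement's English description precedes it below -/
import Mathlib

section
/- For any n ∈ ℕ and any sequence a, one has x^n = ∑_{k=0}^{n} h_{n-k}(a_1, ..., a_{k+1}) (x|a)_k, where h_m denotes the complete homogeneous symmetric polynomial of degree m. -/
/-- Complete homogeneous symmetric polynomial `h_m` in the first `r` entries of `a`
(indexed `a 0, …, a (r-1)`, corresponding to `a_1, …, a_r`). -/
noncomputable def hsymm (r m : ℕ) (a : ℕ → ℂ) : ℂ :=
  ∑ σ ∈ (Finset.range r).sym m, (Multiset.map a σ.val).prod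

lemma hsymm_zero (r : ℕ) (a : ℕ → ℂ) : hsymm r 0 a = 1 := by
  simp only [hsymm, Finset.sym_zero, Finset.sum_singleton]
  rfl

lemma hsymm_nil (m : ℕ) (a : ℕ → ℂ) : hsymm 0 (m + 1) a = 0 := by
  simp [hsymm]

lemma hsymm_rec (r m : ℕ) (a : ℕ → ℂ) :
    hsymm (r + 1) (m + 1) a = hsymm r (m + 1) a + a r * hsymm (r + 1) m a := by
  classical
  unfold hsymm
  rw [← Finset.sum_filter_add_sum_filter_not ((Finset.range (r + 1)).sym (m + 1))
    (fun σ => r ∈ σ)]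
  have h1 : Finset.filter (fun σ => r ∉ σ) ((Finset.range (r + 1)).sym (m + 1))
      = (Finset.range r).sym (m + 1) := by
    ext σ
    simp only [Finset.mem_filter, Finset.mem_sym_iff, Finset.mem_range]
    constructor
    · rintro ⟨h, hr⟩ b hb
      have h1 := h b hb
      have : b ≠ r := fun e => hr (e ▸ hb)
      omega
    · intro h
      refine ⟨fun b hb => (h b hb).trans (Nat.lt_succ_self r), fun hr => ?_⟩
      exact absurd (h r hr) (lt_irrefl r)
  have h2 : ∑ σ ∈ Finset.filter (fun σ => r ∈ σ) ((Finset.range (r + 1)).sym (m + 1)),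
      (Multiset.map a σ.val).prod
      = a r * ∑ τ ∈ (Finset.range (r + 1)).sym m, (Multiset.map a τ.val).prod := by
    rw [Finset.mul_sum]
    refine Finset.sum_bij' (fun σ hσ => σ.erase r (Finset.mem_filter.1 hσ).2)
      (fun τ _ => r ::ₛ τ) ?_ ?_ ?_ ?_ ?_
    · intro σ hσ
      have hσ' := Finset.mem_sym_iff.1 (Finset.mem_filter.1 hσ).1
      refine Finset.mem_sym_iff.2 fun b hb => ?_
      exact hσ' b (Multiset.mem_of_mem_erase hb)
    · intro τ hτ
      rw [Finset.mem_filter]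
      refine ⟨Finset.mem_sym_iff.2 fun b hb => ?_, Sym.mem_cons_self r τ⟩
      rcases Sym.mem_cons.1 hb with h | hb
      · rw [Finset.mem_range]; omega
      · exact Finset.mem_sym_iff.1 hτ b hb
    · intro σ hσ
      exact Sym.cons_erase (Finset.mem_filter.1 hσ).2
    · intro τ hτ
      exact Sym.erase_cons_head τ r
    · intro σ hσ
      have h := Sym.cons_erase (s := σ) (a := r) (Finset.mem_filter.1 hσ).2
      have hval : r ::ₘ (σ.erase r (Finset.mem_filter.1 hσ).2).val = σ.val :=
        congrArg Subtype.val h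
      rw [← hval, Multiset.map_cons, Multiset.prod_cons]
  rw [h2, h1]
  ring

/-- `x^n = ∑_{k=0}^{n} h_{n-k}(a_1,…,a_{k+1}) (x|a)_k`. -/
theorem stmt_3 (a : ℕ → ℂ) (x : ℂ) (n : ℕ) :
    x ^ n = ∑ k ∈ Finset.range (n + 1),
      hsymm (k + 1) (n - k) a * ∏ i ∈ Finset.range k, (x - a i) := by
  induction n with
  | zero => rw [Finset.sum_range_one, hsymm_zero]; simp
  | succ n ih =>
    have key : ∀ k ∈ Finset.range (n + 1),
        hsymm (k + 1) (n + 1 - k) a * ∏ i ∈ Finset.range k, (x - a i)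
        = hsymm k (n + 1 - k) a * ∏ i ∈ Finset.range k, (x - a i)
          + a k * hsymm (k + 1) (n - k) a * ∏ i ∈ Finset.range k, (x - a i) := by
      intro k hk
      rw [Finset.mem_range] at hk
      have hnk : n + 1 - k = (n - k) + 1 := by omega
      rw [hnk, hsymm_rec]
      ring
    have first : ∑ k ∈ Finset.range (n + 1),
        hsymm k (n + 1 - k) a * ∏ i ∈ Finset.range k, (x - a i)
        = ∑ j ∈ Finset.range n,
          hsymm (j + 1) (n - j) a * ∏ i ∈ Finset.range (j + 1), (x - a i) := by
      rw [Finset.sum_range_succ'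
        (fun k => hsymm k (n + 1 - k) a * ∏ i ∈ Finset.range k, (x - a i)) n]
      simp only [Nat.sub_zero, hsymm_nil, zero_mul, add_zero]
      refine Finset.sum_congr rfl fun j hj => ?_
      rw [Finset.mem_range] at hj
      congr 2
      omega
    have lhs_eq : x ^ (n + 1) = ∑ k ∈ Finset.range (n + 1),
        hsymm (k + 1) (n - k) a * ∏ i ∈ Finset.range (k + 1), (x - a i)
        + ∑ k ∈ Finset.range (n + 1),
          a k * hsymm (k + 1) (n - k) a * ∏ i ∈ Finset.range k, (x - a i) := by
      have hx : x ^ (n + 1) = ∑ k ∈ Finset.range (n + 1),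
          hsymm (k + 1) (n - k) a * (x * ∏ i ∈ Finset.range k, (x - a i)) := by
        have : x ^ (n + 1) = x * x ^ n := by ring
        rw [this, ih, Finset.mul_sum]
        exact Finset.sum_congr rfl fun k _ => by ring
      rw [hx, ← Finset.sum_add_distrib]
      refine Finset.sum_congr rfl fun k _ => ?_
      rw [Finset.prod_range_succ]
      ring
    rw [Finset.sum_range_succ, Finset.sum_congr rfl key, Finset.sum_add_distrib, first,
      lhs_eq, Finset.sum_range_succ
        (fun k => hsymm (k + 1) (n - k) a * ∏ i ∈ Finset.range (k + 1), (x - a i)) n]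
    simp only [Nat.sub_self, hsymm_zero, one_mul]
    ring
end

section
/- As formal power series in 1/x, for any n ∈ ℕ, x^{-n} = ∑_{k=n}^{∞} (-1)^{n-k} e_{k-n}(a_1, ..., a_{k-1}) · (x|a)_k^{-1}, where each 1/(x|a)_k is expanded as a power series in 1/x. -/
/-- Elementary symmetric polynomial `e_m` in the first `n` entries of `a`. -/
noncomputable def esymm (n m : ℕ) (a : ℕ → ℂ) : ℂ :=
  ∑ S ∈ (Finset.range n).powersetCard m, ∏ i ∈ S, a i

noncomputable def gg (a : ℕ → ℂ) (k : ℕ) : PowerSeries ℂ :=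
  ∏ i ∈ Finset.range k, (1 - PowerSeries.C (R := ℂ) (a i) * PowerSeries.X)

lemma constCoeff_gg (a : ℕ → ℂ) (k : ℕ) : PowerSeries.constantCoeff (R := ℂ) (gg a k) ≠ 0 := by
  simp [gg]

lemma gg_mul_inv (a : ℕ → ℂ) (k : ℕ) : gg a k * (gg a k)⁻¹ = 1 :=
  PowerSeries.mul_inv_cancel _ (constCoeff_gg a k)

lemma esymm_zero_deg (n : ℕ) (a : ℕ → ℂ) : esymm n 0 a = 1 := by
  simp [esymm]

lemma esymm_top {n m : ℕ} (h : n < m) (a : ℕ → ℂ) : esymm n m a = 0 := by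
  rw [esymm, Finset.powersetCard_eq_empty.2 (by simpa using h), Finset.sum_empty]

lemma esymm_pascal (n m : ℕ) (a : ℕ → ℂ) :
    esymm (n+1) (m+1) a = esymm n (m+1) a + a n * esymm n m a := by
  unfold esymm
  rw [Finset.range_add_one, Finset.powersetCard_succ_insert Finset.notMem_range_self,
    Finset.sum_union, Finset.sum_image]
  · rw [Finset.mul_sum]
    congr 1
    refine Finset.sum_congr rfl fun S hS => ?_
    rw [Finset.prod_insert fun hn => Finset.notMem_range_self
      ((Finset.mem_powersetCard.1 hS).1 hn)]
  · intro S hS T hT hST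
    have hnS : n ∉ S := fun hn => Finset.notMem_range_self ((Finset.mem_powersetCard.1 hS).1 hn)
    have hnT : n ∉ T := fun hn => Finset.notMem_range_self ((Finset.mem_powersetCard.1 hT).1 hn)
    rw [← Finset.erase_insert hnS, ← Finset.erase_insert hnT, hST]
  · rw [Finset.disjoint_left]
    rintro S hS hS'
    obtain ⟨T, hT, rfl⟩ := Finset.mem_image.1 hS'
    exact Finset.notMem_range_self ((Finset.mem_powersetCard.1 hS).1 (Finset.mem_insert_self n T))

open PowerSeries in
lemma gg_expand (a : ℕ → ℂ) (n : ℕ) :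
    gg a n = ∑ j ∈ Finset.range (n+1),
      PowerSeries.C (R := ℂ) ((-1)^j * esymm n j a) * X ^ j := by
  induction n with
  | zero => simp [gg, esymm_zero_deg]
  | succ n ih =>
    rw [gg, Finset.prod_range_succ, ← gg, ih, mul_sub, mul_one, Finset.sum_mul]
    have h2 : ∀ j : ℕ, (PowerSeries.C (R := ℂ) ((-1)^j * esymm n j a) * X ^ j) * (PowerSeries.C (R := ℂ) (a n) * X)
        = PowerSeries.C (R := ℂ) (a n * ((-1)^j * esymm n j a)) * X ^ (j+1) := by
      intro j; simp only [map_mul]; ring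
    simp only [h2]
    rw [Finset.sum_range_succ' (fun j => PowerSeries.C (R := ℂ) ((-1)^j * esymm (n+1) j a) * X ^ j) (n+1),
      Finset.sum_range_succ' (fun j => PowerSeries.C (R := ℂ) ((-1)^j * esymm n j a) * X ^ j) n]
    have hz : PowerSeries.C (R := ℂ) ((-1)^(n+1) * esymm n (n+1) a) * X ^ (n+1) = 0 := by
      rw [esymm_top (Nat.lt_succ_self n) a]; simp
    have hext : (∑ j ∈ Finset.range n, PowerSeries.C (R := ℂ) ((-1)^(j+1) * esymm n (j+1) a) * X ^ (j+1))
        = ∑ j ∈ Finset.range (n+1), PowerSeries.C (R := ℂ) ((-1)^(j+1) * esymm n (j+1) a) * X ^ (j+1) := by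
      rw [Finset.sum_range_succ, hz, add_zero]
    rw [hext]
    have hT : (∑ j ∈ Finset.range (n+1), PowerSeries.C (R := ℂ) ((-1)^(j+1) * esymm (n+1) (j+1) a) * X ^ (j+1))
        = (∑ j ∈ Finset.range (n+1), PowerSeries.C (R := ℂ) ((-1)^(j+1) * esymm n (j+1) a) * X ^ (j+1))
          - ∑ j ∈ Finset.range (n+1), PowerSeries.C (R := ℂ) (a n * ((-1)^j * esymm n j a)) * X ^ (j+1) := by
      rw [← Finset.sum_sub_distrib]
      refine Finset.sum_congr rfl fun j _ => ?_
      rw [esymm_pascal, ← sub_mul, ← map_sub]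
      congr 2
      ring
    rw [hT, esymm_zero_deg, esymm_zero_deg]
    ring

open PowerSeries in
lemma inv_step (a : ℕ → ℂ) (N : ℕ) :
    (gg a N)⁻¹ = (gg a (N+1))⁻¹ * (1 - PowerSeries.C (R := ℂ) (a N) * X) := by
  rw [PowerSeries.inv_eq_iff_mul_eq_one (constCoeff_gg a N), mul_assoc]
  have h : (1 - PowerSeries.C (R := ℂ) (a N) * X) * gg a N = gg a (N+1) := by
    rw [gg, gg, Finset.prod_range_succ]; ring
  rw [h, mul_comm]
  exact gg_mul_inv a (N+1)

open PowerSeries in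
lemma Tstep (a : ℕ → ℂ) (n d : ℕ) :
    (1 - PowerSeries.C (R := ℂ) (a (n+d)) * X) *
      (∑ j ∈ Finset.range n, PowerSeries.C (R := ℂ) ((-1)^(d+j+1) * esymm (n+d) (d+j+1) a) * X^(n+d+j+1))
    = PowerSeries.C (R := ℂ) ((-1:ℂ)^(d+1) * esymm (n+d) (d+1) a) * X^(n+d+1)
      + ∑ j ∈ Finset.range n, PowerSeries.C (R := ℂ) ((-1)^(d+j+2) * esymm (n+d+1) (d+j+2) a) * X^(n+d+j+2) := by
  cases n with
  | zero =>
    simp [esymm_top (Nat.lt_succ_self d) a]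
  | succ p =>
    rw [sub_mul, one_mul, Finset.mul_sum]
    have h2 : ∀ j : ℕ, (PowerSeries.C (R := ℂ) (a (p+1+d)) * X) *
        (PowerSeries.C (R := ℂ) ((-1)^(d+j+1) * esymm (p+1+d) (d+j+1) a) * X^(p+1+d+j+1))
        = PowerSeries.C (R := ℂ) (a (p+1+d) * ((-1)^(d+j+1) * esymm (p+1+d) (d+j+1) a)) * X^(p+1+d+j+2) := by
      intro j; simp only [map_mul]; rw [show p+1+d+j+2 = (p+1+d+j+1)+1 from rfl]; ring
    simp only [h2]
    rw [Finset.sum_range_succ'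
      (fun j => PowerSeries.C (R := ℂ) ((-1)^(d+j+1) * esymm (p+1+d) (d+j+1) a) * X^(p+1+d+j+1)) p]
    have hnorm : ∀ j : ℕ, PowerSeries.C (R := ℂ) ((-1)^(d+(j+1)+1) * esymm (p+1+d) (d+(j+1)+1) a) * X^(p+1+d+(j+1)+1)
        = PowerSeries.C (R := ℂ) ((-1)^(d+j+2) * esymm (p+1+d) (d+j+2) a) * X^(p+1+d+j+2) := by
      intro j
      simp only [show d+(j+1)+1 = d+j+2 from by ring, show p+1+d+(j+1)+1 = p+1+d+j+2 from by ring]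
    simp only [hnorm]
    have hext : (∑ j ∈ Finset.range p, PowerSeries.C (R := ℂ) ((-1)^(d+j+2) * esymm (p+1+d) (d+j+2) a) * X^(p+1+d+j+2))
        = ∑ j ∈ Finset.range (p+1), PowerSeries.C (R := ℂ) ((-1)^(d+j+2) * esymm (p+1+d) (d+j+2) a) * X^(p+1+d+j+2) := by
      rw [Finset.sum_range_succ, esymm_top (by omega) a]
      simp
    rw [hext]
    have hT : (∑ j ∈ Finset.range (p+1), PowerSeries.C (R := ℂ) ((-1)^(d+j+2) * esymm (p+1+d+1) (d+j+2) a) * X^(p+1+d+j+2))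
        = (∑ j ∈ Finset.range (p+1), PowerSeries.C (R := ℂ) ((-1)^(d+j+2) * esymm (p+1+d) (d+j+2) a) * X^(p+1+d+j+2))
          - ∑ j ∈ Finset.range (p+1), PowerSeries.C (R := ℂ) (a (p+1+d) * ((-1)^(d+j+1) * esymm (p+1+d) (d+j+1) a)) * X^(p+1+d+j+2) := by
      rw [← Finset.sum_sub_distrib]
      refine Finset.sum_congr rfl fun j _ => ?_
      rw [← sub_mul, ← map_sub]
      congr 2
      rw [show d+j+2 = (d+j+1)+1 from rfl, esymm_pascal]
      ring
    rw [hT, show d+0+1 = d+1 from by ring, show p+1+d+0+1 = p+1+d+1 from by ring]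
    ring

open PowerSeries in
lemma key (a : ℕ → ℂ) (n d : ℕ) :
    (X : PowerSeries ℂ)^n
      = (∑ i ∈ Finset.range (d+1),
          PowerSeries.C (R := ℂ) ((-1)^i * esymm (n+i-1) i a) * (X^(n+i) * (gg a (n+i))⁻¹))
        + (gg a (n+d))⁻¹ *
          ∑ j ∈ Finset.range n, PowerSeries.C (R := ℂ) ((-1)^(d+j+1) * esymm (n+d) (d+j+1) a) * X^(n+d+j+1) := by
  induction d with
  | zero =>
    rw [Finset.sum_range_one]
    simp only [Nat.add_zero, pow_zero, esymm_zero_deg, mul_one, one_mul, map_one]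
    have hXg : (X : PowerSeries ℂ)^n * gg a n
        = X^n + ∑ j ∈ Finset.range n, PowerSeries.C (R := ℂ) ((-1)^(0+j+1) * esymm n (0+j+1) a) * X^(n+j+1) := by
      rw [gg_expand, Finset.mul_sum]
      have h2 : ∀ j : ℕ, (X : PowerSeries ℂ)^n * (PowerSeries.C (R := ℂ) ((-1)^j * esymm n j a) * X ^ j)
          = PowerSeries.C (R := ℂ) ((-1)^j * esymm n j a) * X ^ (n+j) := by
        intro j; rw [pow_add]; ring
      simp only [h2]
      rw [Finset.sum_range_succ' (fun j => PowerSeries.C (R := ℂ) ((-1)^j * esymm n j a) * X ^ (n+j)) n]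
      simp only [esymm_zero_deg, pow_zero, one_mul, map_one, Nat.add_zero]
      have hnorm : ∀ j : ℕ, PowerSeries.C (R := ℂ) ((-1)^(j+1) * esymm n (j+1) a) * X^(n+(j+1))
          = PowerSeries.C (R := ℂ) ((-1)^(0+j+1) * esymm n (0+j+1) a) * X^(n+j+1) := by
        intro j
        simp only [show 0+j+1 = j+1 from by ring, show n+j+1 = n+(j+1) from by ring]
      simp only [hnorm]
      ring
    calc (X : PowerSeries ℂ)^n = (X^n * gg a n) * (gg a n)⁻¹ := by
          rw [mul_assoc, gg_mul_inv, mul_one]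
      _ = _ := by
          rw [hXg, add_mul]
          congr 1
          rw [Finset.sum_mul, Finset.mul_sum]
          refine Finset.sum_congr rfl fun j _ => ?_
          ring
  | succ d ih =>
    rw [ih, inv_step a (n+d), mul_assoc, Tstep a n d, mul_add,
      Finset.sum_range_succ (fun i =>
        PowerSeries.C (R := ℂ) ((-1)^i * esymm (n+i-1) i a) * (X^(n+i) * (gg a (n+i))⁻¹)) (d+1)]
    have hnorm : ∀ j : ℕ,
        PowerSeries.C (R := ℂ) ((-1)^((d+1)+j+1) * esymm (n+(d+1)) ((d+1)+j+1) a) * X^(n+(d+1)+j+1)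
        = PowerSeries.C (R := ℂ) ((-1)^(d+j+2) * esymm (n+d+1) (d+j+2) a) * X^(n+d+j+2) := by
      intro j
      simp only [show (d+1)+j+1 = d+j+2 from by ring, show n+(d+1) = n+d+1 from by ring,
        show n+(d+1)+j+1 = n+d+j+2 from by ring, show n+d+1+j+1 = n+d+j+2 from by ring]
    simp only [hnorm]
    rw [show n+(d+1)-1 = n+d from by omega, show n+(d+1) = n+d+1 from by ring]
    ring

/-- As formal power series in `t = 1/x`:
`x^{-n} = ∑_{k ≥ n} (-1)^{n-k} e_{k-n}(a_1,…,a_{k-1}) · (x|a)_k^{-1}`,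
where `1/(x|a)_k` is expanded at infinity as `t^k · (∏_{i=1}^k (1 - a_i t))⁻¹`.
The equality is asserted coefficientwise. -/
theorem stmt_5 (a : ℕ → ℂ) (n m : ℕ) :
    (PowerSeries.coeff (R := ℂ) m) ((PowerSeries.X : PowerSeries ℂ) ^ n)
      = ∑' k : ℕ,
          if n ≤ k then
            (-1 : ℂ) ^ (k - n) * esymm (k - 1) (k - n) a *
              (PowerSeries.coeff (R := ℂ) m)
                (PowerSeries.X ^ k *
                  (∏ i ∈ Finset.range k, (1 - PowerSeries.C (R := ℂ) (a i) * PowerSeries.X))⁻¹)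
          else 0 := by
  classical
  set F : ℕ → ℂ := fun k =>
    if n ≤ k then
      (-1 : ℂ) ^ (k - n) * esymm (k - 1) (k - n) a *
        (PowerSeries.coeff (R := ℂ) m)
          (PowerSeries.X ^ k *
            (∏ i ∈ Finset.range k, (1 - PowerSeries.C (R := ℂ) (a i) * PowerSeries.X))⁻¹)
    else 0 with hF
  have hzero : ∀ k, m < k → F k = 0 := by
    intro k hk
    rw [hF]
    dsimp only
    split
    · rw [PowerSeries.coeff_X_pow_mul', if_neg (by omega), mul_zero]
    · rfl
  by_cases hnm : n ≤ m
  · -- main case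
    have hsupp : ∀ k ∉ Finset.range (m+1), F k = 0 := by
      intro k hk
      exact hzero k (by simpa using hk)
    rw [tsum_eq_sum hsupp]
    have hsplit : (∑ k ∈ Finset.range (m+1), F k) = ∑ k ∈ Finset.Ico n (m+1), F k := by
      rw [Finset.range_eq_Ico, ← Finset.sum_Ico_consecutive _ (Nat.zero_le n) (by omega : n ≤ m+1)]
      have h0 : (∑ k ∈ Finset.Ico 0 n, F k) = 0 := by
        refine Finset.sum_eq_zero fun k hk => ?_
        rw [hF]
        dsimp only
        rw [if_neg (by simp at hk; omega)]
      rw [h0, zero_add]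
    rw [hsplit, Finset.sum_Ico_eq_sum_range]
    have hd : m + 1 - n = (m - n) + 1 := by omega
    rw [hd]
    -- now use key
    have hk := congrArg (PowerSeries.coeff (R := ℂ) m) (key a n (m-n))
    rw [map_add, map_sum] at hk
    have hrem : (PowerSeries.coeff (R := ℂ) m) ((gg a (n+(m-n)))⁻¹ *
        ∑ j ∈ Finset.range n, PowerSeries.C (R := ℂ) ((-1)^((m-n)+j+1) * esymm (n+(m-n)) ((m-n)+j+1) a)
          * PowerSeries.X^(n+(m-n)+j+1)) = 0 := by
      rw [Finset.mul_sum, map_sum]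
      refine Finset.sum_eq_zero fun j _ => ?_
      have : (gg a (n+(m-n)))⁻¹ * (PowerSeries.C (R := ℂ) ((-1)^((m-n)+j+1) * esymm (n+(m-n)) ((m-n)+j+1) a)
          * PowerSeries.X^(n+(m-n)+j+1))
          = (PowerSeries.C (R := ℂ) ((-1)^((m-n)+j+1) * esymm (n+(m-n)) ((m-n)+j+1) a) * (gg a (n+(m-n)))⁻¹)
            * PowerSeries.X^(n+(m-n)+j+1) := by ring
      rw [this, PowerSeries.coeff_mul_X_pow', if_neg (by omega)]
    rw [hrem, add_zero] at hk
    rw [hk]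
    refine Finset.sum_congr rfl fun i hi => ?_
    rw [hF]
    dsimp only
    rw [if_pos (by omega : n ≤ n + i)]
    rw [PowerSeries.coeff_C_mul]
    rw [show n + i - n = i from by omega]
    rfl
  · -- m < n : both sides zero
    have hL : (PowerSeries.coeff (R := ℂ) m) ((PowerSeries.X : PowerSeries ℂ) ^ n) = 0 := by
      rw [PowerSeries.coeff_X_pow, if_neg (by omega)]
    rw [hL]
    have : ∀ k, F k = 0 := by
      intro k
      by_cases hk : n ≤ k
      · exact hzero k (by omega)
      · rw [hF]; dsimp only; rw [if_neg hk]
    rw [show F = (fun _ => (0:ℂ)) from funext this, tsum_zero]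
end

section
/- Suppose A is an invertible ℤ×ℤ block matrix of the form A = diag(A^-, 1, A^+) where A^- = (A_{i,j})_{i,j<0}, A^+ = (A_{i,j})_{i,j>0}, A_{0,0} = 1, and all off-block entries vanish, and A^{-1} = diag((A^-)^{-1}, 1, (A^+)^{-1}). Then with f_k, g_k as above, ∑_{k≥0} g_k(x^{-1}) f_k(y) = ∑_{k≥0} y^k/x^k and ∑_{k<0} g_k(x^{-1}) f_k(y) = ∑_{k≥1} x^k/y^k, as formal distributions. -/
/-- For a block matrix `A = diag(A⁻, 1, A⁺)` with inverse `B = diag((A⁻)⁻¹, 1, (A⁺)⁻¹)`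
and `A_{0,0} = B_{0,0} = 1`, the distributions `f_k(x) = ∑_s A_{-k,-s} x^s`,
`g_k(x) = ∑_s B_{-s,-k} x^s` satisfy
`∑_{k≥0} g_k(x⁻¹) f_k(y) = ∑_{k≥0} y^k/x^k` and
`∑_{k<0} g_k(x⁻¹) f_k(y) = ∑_{k≥1} x^k/y^k`.
Coefficientwise (`x^{-r} y^p`): `∑_{k≥0} B_{-r,-k} A_{-k,-p} = [r = p ∧ r ≥ 0]` and
`∑_{k≥1} B_{-r,k} A_{k,-p} = [r = p ∧ r < 0]`. -/
theorem stmt_13 (A B : ℤ → ℤ → ℂ)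
    (hAblock : ∀ i j : ℤ,
      ¬((i < 0 ∧ j < 0) ∨ (i = 0 ∧ j = 0) ∨ (0 < i ∧ 0 < j)) → A i j = 0)
    (hBblock : ∀ i j : ℤ,
      ¬((i < 0 ∧ j < 0) ∨ (i = 0 ∧ j = 0) ∨ (0 < i ∧ 0 < j)) → B i j = 0)
    (hA00 : A 0 0 = 1) (hB00 : B 0 0 = 1)
    (hinv : ∀ i j : ℤ, HasSum (fun k : ℤ => B i k * A k j) (if i = j then 1 else 0)) :
    ∀ r p : ℤ,
      HasSum (fun k : ℕ => B (-r) (-(k : ℤ)) * A (-(k : ℤ)) (-p))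
        (if r = p ∧ 0 ≤ r then 1 else 0) ∧
      HasSum (fun k : ℕ => B (-r) ((k : ℤ) + 1) * A ((k : ℤ) + 1) (-p))
        (if r = p ∧ r < 0 then 1 else 0) := by
  intro r p
  have h := hinv (-r) (-p)
  rcases le_or_gt 0 r with hr | hr
  · refine ⟨?_, ?_⟩
    · have hinj : Function.Injective (fun k : ℕ => -(k : ℤ)) := by
        intro a b hab; simpa using hab
      have hz : ∀ x : ℤ, x ∉ Set.range (fun k : ℕ => -(k : ℤ)) →
          B (-r) x * A x (-p) = 0 := by
        intro x hx
        have hxpos : 0 < x := by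
          by_contra hle
          push_neg at hle
          exact hx ⟨(-x).toNat, show -(((-x).toNat):ℤ) = x by omega⟩
        have hB0 : B (-r) x = 0 := hBblock _ _ (by omega)
        simp [hB0]
      have h2 := (hinj.hasSum_iff hz).mpr h
      have hcond : ((-r : ℤ) = -p) = (r = p ∧ 0 ≤ r) := by
        simp only [neg_inj, eq_iff_iff]
        constructor
        · exact fun h => ⟨h, hr⟩
        · exact fun h => h.1
      simpa only [hcond, Function.comp_def] using h2
    · have hfun : (fun k : ℕ => B (-r) ((k : ℤ) + 1) * A ((k : ℤ) + 1) (-p))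
          = fun _ => (0 : ℂ) := by
        funext k
        have hB0 : B (-r) ((k : ℤ) + 1) = 0 := hBblock _ _ (by omega)
        simp [hB0]
      rw [hfun, if_neg (by omega)]
      exact hasSum_zero
  · refine ⟨?_, ?_⟩
    · have hfun : (fun k : ℕ => B (-r) (-(k : ℤ)) * A (-(k : ℤ)) (-p))
          = fun _ => (0 : ℂ) := by
        funext k
        have hB0 : B (-r) (-(k : ℤ)) = 0 := hBblock _ _ (by omega)
        simp [hB0]
      rw [hfun, if_neg (by omega)]
      exact hasSum_zero
    · have hinj : Function.Injective (fun k : ℕ => (k : ℤ) + 1) := by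
        intro a b hab; simpa using hab
      have hz : ∀ x : ℤ, x ∉ Set.range (fun k : ℕ => (k : ℤ) + 1) →
          B (-r) x * A x (-p) = 0 := by
        intro x hx
        have hxle : x ≤ 0 := by
          by_contra hle
          push_neg at hle
          exact hx ⟨(x - 1).toNat, show ((x-1).toNat:ℤ) + 1 = x by omega⟩
        have hB0 : B (-r) x = 0 := hBblock _ _ (by omega)
        simp [hB0]
      have h2 := (hinj.hasSum_iff hz).mpr h
      have hcond : ((-r : ℤ) = -p) = (r = p ∧ r < 0) := by
        simp only [neg_inj, eq_iff_iff]
        constructor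
        · exact fun h => ⟨h, hr⟩
        · exact fun h => h.1
      simpa only [hcond, Function.comp_def] using h2
end
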